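/- There is an absolute constant C with the following property: for every t > 0, every n ∈ ℕ, every family u₁,…,uₙ ∈ L¹(ℝ³;ℂ) ∩ L²(ℝ³;ℂ), and every orthonormal family v₁,…,vₙ in L²(ℝ³;ℂ), one has ‖Σ_{k=1}^{n}(e^{itΔ}u_k)·v_k‖_{L²(ℝ³)} ≤ C t^{−3/2} ∫_{ℝ³} (Σ_{k=1}^{n}|u_k(y)|²)^{1/2} dy, where for u ∈ L¹(ℝ³) we define (e^{itΔ}u)(x) := (4πt)^{−3/2} ∫_{ℝ³} exp(i‖x−y‖²/(4t)) u(y) dy (the free Schrödinger propagator up to an irrelevant unimodular constant). -/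

import Mathlib

open MeasureTheory

noncomputable section

abbrev E3 := EuclideanSpace ℝ (Fin 3)

/-- The free Schrödinger propagator (up to an irrelevant unimodular constant):
`(e^{itΔ}u)(x) = (4πt)^{−3/2} ∫ exp(i‖x−y‖²/(4t)) u(y) dy`. -/
def freeProp (t : ℝ) (u : E3 → ℂ) (x : E3) : ℂ :=
  ((4 * Real.pi * t) ^ (-(3 : ℝ) / 2) : ℝ) *
    ∫ y : E3, Complex.exp (Complex.I * ((‖x - y‖ ^ 2 / (4 * t) : ℝ) : ℂ)) * u y

/-- There is an absolute constant `C` such that for every `t > 0`, every finite family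
`u₁,…,uₙ ∈ L¹ ∩ L²` and every orthonormal family `v₁,…,vₙ` in `L²(ℝ³;ℂ)`,
`‖Σ_k (e^{itΔ}u_k)·v_k‖_{L²} ≤ C t^{−3/2} ∫ (Σ_k |u_k(y)|²)^{1/2} dy`. -/
theorem stmt6 :
    ∃ C > 0, ∀ (t : ℝ), 0 < t → ∀ (n : ℕ) (u v : Fin n → E3 → ℂ),
      (∀ k, MemLp (u k) 1 volume) → (∀ k, MemLp (u k) 2 volume) →
      (∀ k, MemLp (v k) 2 volume) →
      (∀ j k, (∫ x, (starRingEnd ℂ) (v j x) * v k x) = if j = k then 1 else 0) →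
      Real.sqrt (∫ x, ‖∑ k, freeProp t (u k) x * v k x‖ ^ 2)
        ≤ C * t ^ (-(3 : ℝ) / 2) * ∫ y, Real.sqrt (∑ k, ‖u k y‖ ^ 2) := by
  classical
  refine ⟨(4 * Real.pi) ^ (-(3 : ℝ) / 2), by positivity, ?_⟩
  intro t ht n u v hu1 hu2 hv2 hortho
  have hu1' : ∀ k, Integrable (u k) volume := fun k => memLp_one_iff_integrable.mp (hu1 k)
  obtain ⟨c, hc_def⟩ : ∃ c' : ℝ, c' = (4 * Real.pi * t) ^ (-(3 : ℝ) / 2) := ⟨_, rfl⟩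
  have hc : 0 < c := by rw [hc_def]; positivity
  obtain ⟨K, hK_def⟩ : ∃ K' : E3 → E3 → ℂ,
      K' = fun x y => Complex.exp (Complex.I * ((‖x - y‖ ^ 2 / (4 * t) : ℝ) : ℂ)) := ⟨_, rfl⟩
  have hK1 : ∀ x y, ‖K x y‖ = 1 := by
    intro x y
    simp only [hK_def]
    rw [Complex.norm_exp]
    norm_num [Complex.mul_re, Complex.div_im, Complex.div_re, pow_two, Complex.mul_im]
  have hKcont : Continuous fun p : E3 × E3 => K p.1 p.2 := by
    simp only [hK_def]; fun_prop
  have hKy_cont : ∀ y : E3, Continuous fun x => K x y := fun y =>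
    hKcont.comp (continuous_id.prodMk continuous_const)
  have hKx_cont : ∀ x : E3, Continuous fun y => K x y := fun x =>
    hKcont.comp (continuous_const.prodMk continuous_id)
  obtain ⟨g, hg_def⟩ : ∃ g' : Fin n → E3 → ℂ, g' = fun k x => ∫ y, K x y * u k y := ⟨_, rfl⟩
  have hfp : ∀ (k : Fin n) (x : E3), freeProp t (u k) x = (c : ℂ) * g k x := by
    intro k x
    simp only [hg_def, hK_def, hc_def, freeProp]
  have hgcont : ∀ k, Continuous (g k) := by
    intro k
    simp only [hg_def]
    apply continuous_of_dominated (bound := fun y => ‖u k y‖)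
    · exact fun x => ((hKx_cont x).aestronglyMeasurable).mul (hu1 k).1
    · intro x
      filter_upwards with y
      rw [norm_mul, hK1, one_mul]
    · exact (hu1' k).norm
    · filter_upwards with y
      exact (hKy_cont y).mul continuous_const
  obtain ⟨M, hM_def⟩ : ∃ M' : Fin n → ℝ, M' = fun k => ∫ y, ‖u k y‖ := ⟨_, rfl⟩
  have hgbdd : ∀ k x, ‖g k x‖ ≤ M k := by
    intro k x
    simp only [hg_def, hM_def]
    calc ‖∫ y, K x y * u k y‖ ≤ ∫ y, ‖K x y * u k y‖ := norm_integral_le_integral_norm _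
      _ = ∫ y, ‖u k y‖ :=
        integral_congr_ae (ae_of_all _ fun y => by simp only [norm_mul, hK1, one_mul])
  obtain ⟨F, hF_def⟩ : ∃ F' : E3 → ℂ, F' = fun x => ∑ k, (c : ℂ) * g k x * v k x := ⟨_, rfl⟩
  have hF2 : MemLp F 2 volume := by
    simp only [hF_def]
    apply memLp_finset_sum
    intro k _
    refine (hv2 k).of_le_mul (c := c * M k)
      (((continuous_const.mul (hgcont k)).aestronglyMeasurable).mul (hv2 k).1) ?_
    filter_upwards with x
    calc ‖(c : ℂ) * g k x * v k x‖ = c * ‖g k x‖ * ‖v k x‖ := by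
          rw [norm_mul, norm_mul, Complex.norm_real, Real.norm_of_nonneg hc.le]
      _ ≤ c * M k * ‖v k x‖ := by
          gcongr
          exact hgbdd k x
  obtain ⟨FL, hFL_def⟩ : ∃ FL' : Lp ℂ 2 (volume : Measure E3), FL' = hF2.toLp F := ⟨_, rfl⟩
  obtain ⟨V, hV_def⟩ : ∃ V' : Fin n → Lp ℂ 2 (volume : Measure E3),
      V' = fun k => (hv2 k).toLp (v k) := ⟨_, rfl⟩
  have hVon : Orthonormal ℂ V := by
    rw [orthonormal_iff_ite]
    intro j k
    have h1 : (inner ℂ (V j) (V k) : ℂ) = ∫ x, (starRingEnd ℂ) (v j x) * v k x := by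
      simp only [hV_def]
      rw [L2.inner_def]
      apply integral_congr_ae
      filter_upwards [(hv2 j).coeFn_toLp, (hv2 k).coeFn_toLp] with x hj hk
      rw [RCLike.inner_apply', hj, hk]
    rw [h1, hortho j k]
  obtain ⟨NF, hNF_def⟩ : ∃ NF' : ℝ, NF' = ‖FL‖ := ⟨_, rfl⟩
  have hNFnn : 0 ≤ NF := by rw [hNF_def]; exact norm_nonneg _
  have hJ : (∫ x, (starRingEnd ℂ) (F x) * F x) = ((NF : ℂ)) ^ 2 := by
    have h1 : (inner ℂ FL FL : ℂ) = ∫ x, (starRingEnd ℂ) (F x) * F x := by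
      simp only [hFL_def]
      rw [L2.inner_def]
      apply integral_congr_ae
      filter_upwards [hF2.coeFn_toLp] with x hx
      rw [RCLike.inner_apply', hx]
    rw [← h1, inner_self_eq_norm_sq_to_K, hNF_def]
    norm_cast
  have hFF : Integrable (fun x => (starRingEnd ℂ) (F x) * F x) volume := by
    have h1 := L2.integrable_inner (𝕜 := ℂ) (hF2.toLp F) (hF2.toLp F)
    refine h1.congr ?_
    filter_upwards [hF2.coeFn_toLp] with x hx
    rw [RCLike.inner_apply', hx]
  have hI : ∫ x, ‖F x‖ ^ 2 = NF ^ 2 := by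
    have h1 : ∫ x, ‖F x‖ ^ 2 = RCLike.re (∫ x, (starRingEnd ℂ) (F x) * F x) := by
      rw [← integral_re hFF]
      apply integral_congr_ae
      filter_upwards with x
      rw [RCLike.conj_mul]
      simp [← Complex.ofReal_pow]
    rw [h1, hJ]
    simp [← Complex.ofReal_pow]
  have hLHS : Real.sqrt (∫ x, ‖∑ k, freeProp t (u k) x * v k x‖ ^ 2) = NF := by
    have hFeq : ∀ x : E3, (∑ k, freeProp t (u k) x * v k x) = F x := by
      intro x
      simp only [hF_def]
      exact Finset.sum_congr rfl fun k _ => by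
        show freeProp t (u k) x * v k x = (c : ℂ) * g k x * v k x
        rw [hfp]
    have hFeq2 : (fun x : E3 => ‖∑ k, freeProp t (u k) x * v k x‖ ^ 2)
        = fun x => ‖F x‖ ^ 2 := by
      funext x
      rw [hFeq x]
    rw [hFeq2, hI, Real.sqrt_sq hNFnn]
  -- the coefficients a k y = ⟨F · conj K(·,y), v k⟩
  have hw : ∀ k, Integrable (fun x => (starRingEnd ℂ) (F x) * v k x) volume := by
    intro k
    have h1 := L2.integrable_inner (𝕜 := ℂ) (hF2.toLp F) ((hv2 k).toLp (v k))
    refine h1.congr ?_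
    filter_upwards [hF2.coeFn_toLp, (hv2 k).coeFn_toLp] with x h1 h2
    rw [RCLike.inner_apply', h1, h2]
  obtain ⟨a, ha_def⟩ : ∃ a' : Fin n → E3 → ℂ,
      a' = fun k y => ∫ x, K x y * ((starRingEnd ℂ) (F x) * v k x) := ⟨_, rfl⟩
  have hacont : ∀ k, Continuous (a k) := by
    intro k
    simp only [ha_def]
    apply continuous_of_dominated (bound := fun x => ‖(starRingEnd ℂ) (F x) * v k x‖)
    · exact fun y => ((hKy_cont y).aestronglyMeasurable).mul (hw k).1
    · intro y
      filter_upwards with x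
      rw [norm_mul, hK1, one_mul]
    · exact (hw k).norm
    · filter_upwards with x
      exact (hKx_cont x).mul continuous_const
  have habdd : ∀ k y, ‖a k y‖ ≤ ∫ x, ‖(starRingEnd ℂ) (F x) * v k x‖ := by
    intro k y
    simp only [ha_def]
    calc ‖∫ x, K x y * ((starRingEnd ℂ) (F x) * v k x)‖
        ≤ ∫ x, ‖K x y * ((starRingEnd ℂ) (F x) * v k x)‖ := norm_integral_le_integral_norm _
      _ = ∫ x, ‖(starRingEnd ℂ) (F x) * v k x‖ :=
        integral_congr_ae (ae_of_all _ fun x => by simp only [norm_mul, hK1, one_mul])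
  -- Bessel
  have hBessel : ∀ y : E3, (∑ k, ‖a k y‖ ^ 2) ≤ NF ^ 2 := by
    intro y
    have hhy : MemLp (fun x => F x * (starRingEnd ℂ) (K x y)) 2 volume := by
      refine hF2.of_le_mul (c := 1)
        (hF2.1.mul ((continuous_star.comp (hKy_cont y)).aestronglyMeasurable)) ?_
      filter_upwards with x
      rw [norm_mul, RCLike.norm_conj, hK1, mul_one, one_mul]
    have hHYnorm : ‖hhy.toLp _‖ = NF := by
      rw [hNF_def, hFL_def, Lp.norm_toLp, Lp.norm_toLp]
      congr 1
      apply eLpNorm_congr_norm_ae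
      filter_upwards with x
      rw [norm_mul, RCLike.norm_conj, hK1, mul_one]
    have hinner : ∀ k, (inner ℂ (hhy.toLp _) (V k) : ℂ) = a k y := by
      intro k
      simp only [hV_def]
      rw [L2.inner_def]
      simp only [ha_def]
      apply integral_congr_ae
      filter_upwards [hhy.coeFn_toLp, (hv2 k).coeFn_toLp] with x h1 h2
      rw [RCLike.inner_apply', h1, h2, map_mul, Complex.conj_conj]
      ring
    calc (∑ k, ‖a k y‖ ^ 2) = ∑ k, ‖(inner ℂ (V k) (hhy.toLp _) : ℂ)‖ ^ 2 := by
          refine Finset.sum_congr rfl fun k _ => ?_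
          rw [← inner_conj_symm, hinner k, RCLike.norm_conj]
      _ ≤ ‖hhy.toLp _‖ ^ 2 := hVon.sum_inner_products_le _
      _ = NF ^ 2 := by rw [hHYnorm]
  -- expand ‖F‖² as a sum of integrals
  have hint_term : ∀ k,
      Integrable (fun x => (starRingEnd ℂ) (F x) * ((c : ℂ) * g k x * v k x)) volume := by
    intro k
    have h1 : (fun x => (starRingEnd ℂ) (F x) * ((c : ℂ) * g k x * v k x))
        = fun x => ((c : ℂ) * g k x) * ((starRingEnd ℂ) (F x) * v k x) := by
      funext x; ring
    rw [h1]
    refine (hw k).bdd_mul ((continuous_const.mul (hgcont k)).aestronglyMeasurable)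
      (c := c * M k) (ae_of_all _ fun x => ?_)
    rw [norm_mul, Complex.norm_real, Real.norm_of_nonneg hc.le]
    exact mul_le_mul_of_nonneg_left (hgbdd k x) hc.le
  have hJsum : ((NF : ℂ)) ^ 2
      = ∑ k, ∫ x, (starRingEnd ℂ) (F x) * ((c : ℂ) * g k x * v k x) := by
    rw [← hJ, ← integral_finset_sum _ fun k _ => hint_term k]
    apply integral_congr_ae
    filter_upwards with x
    rw [← Finset.mul_sum]
    congr 1
    simp only [hF_def]
  -- Fubini for each term
  have hterm : ∀ k, (∫ x, (starRingEnd ℂ) (F x) * ((c : ℂ) * g k x * v k x))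
      = (c : ℂ) * ∫ y, u k y * a k y := by
    intro k
    have h1 : ∀ x : E3, (starRingEnd ℂ) (F x) * ((c : ℂ) * g k x * v k x)
        = (c : ℂ) * (g k x * ((starRingEnd ℂ) (F x) * v k x)) := fun x => by ring
    simp_rw [h1]
    rw [integral_const_mul]
    congr 1
    have h2 : ∀ x : E3, g k x * ((starRingEnd ℂ) (F x) * v k x)
        = ∫ y, K x y * u k y * ((starRingEnd ℂ) (F x) * v k x) := by
      intro x
      simp only [hg_def]
      exact (integral_mul_const _ _).symm
    simp_rw [h2]
    have hFub : Integrable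
        (Function.uncurry fun x y : E3 => K x y * u k y * ((starRingEnd ℂ) (F x) * v k x))
        ((volume : Measure E3).prod volume) := by
      have hgprod : Integrable
          (fun p : E3 × E3 => ‖(starRingEnd ℂ) (F p.1) * v k p.1‖ * ‖u k p.2‖)
          ((volume : Measure E3).prod volume) :=
        Integrable.mul_prod (hw k).norm (hu1' k).norm
      refine hgprod.mono' ?_ ?_
      · simp only [Function.uncurry_def]
        exact (hKcont.aestronglyMeasurable.mul (hu1 k).1.comp_snd).mul ((hw k).1.comp_fst)
      · filter_upwards with p
        simp only [Function.uncurry_def]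
        rw [norm_mul, norm_mul, hK1, one_mul, mul_comm]
    rw [integral_integral_swap hFub]
    apply integral_congr_ae
    filter_upwards with y
    have h3 : ∀ x : E3, K x y * u k y * ((starRingEnd ℂ) (F x) * v k x)
        = u k y * (K x y * ((starRingEnd ℂ) (F x) * v k x)) := fun x => by ring
    simp_rw [h3]
    rw [integral_const_mul]
    congr 1
    simp only [ha_def]
  have hiua : ∀ k, Integrable (fun y => u k y * a k y) volume := by
    intro k
    have h1 : Integrable (fun y => a k y * u k y) volume :=
      (hu1' k).bdd_mul (hacont k).aestronglyMeasurable (ae_of_all _ fun y => habdd k y)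
    exact h1.congr (ae_of_all _ fun y => mul_comm _ _)
  have hS : ((NF : ℂ)) ^ 2 = (c : ℂ) * ∫ y, ∑ k, u k y * a k y := by
    rw [hJsum]
    have : ∀ k ∈ Finset.univ, (∫ x, (starRingEnd ℂ) (F x) * ((c : ℂ) * g k x * v k x))
        = (c : ℂ) * ∫ y, u k y * a k y := fun k _ => hterm k
    rw [Finset.sum_congr rfl this, ← Finset.mul_sum,
      ← integral_finset_sum _ fun k _ => hiua k]
  -- integrability of the pointwise ℓ² norm of u
  have hsq_meas : AEStronglyMeasurable (fun y => Real.sqrt (∑ k, ‖u k y‖ ^ 2)) volume := by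
    apply Real.continuous_sqrt.comp_aestronglyMeasurable
    apply Finset.aestronglyMeasurable_fun_sum
    intro k _
    have h1 : AEStronglyMeasurable (fun y => ‖u k y‖ * ‖u k y‖) volume :=
      (hu1 k).1.norm.mul (hu1 k).1.norm
    exact h1.congr (ae_of_all _ fun y => (pow_two ‖u k y‖).symm)
  have hsq_le : ∀ y, Real.sqrt (∑ k, ‖u k y‖ ^ 2) ≤ ∑ k, ‖u k y‖ := by
    intro y
    rw [show (∑ k, ‖u k y‖) = Real.sqrt ((∑ k, ‖u k y‖) ^ 2) from
      (Real.sqrt_sq (by positivity)).symm]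
    exact Real.sqrt_le_sqrt (Finset.sum_sq_le_sq_sum_of_nonneg fun k _ => norm_nonneg _)
  have hsq_int : Integrable (fun y => Real.sqrt (∑ k, ‖u k y‖ ^ 2)) volume := by
    refine Integrable.mono' (g := fun y => ∑ k, ‖u k y‖)
      (integrable_finset_sum Finset.univ fun k _ => (hu1' k).norm) hsq_meas ?_
    filter_upwards with y
    rw [Real.norm_of_nonneg (Real.sqrt_nonneg _)]
    exact hsq_le y
  have hR0 : 0 ≤ ∫ y, Real.sqrt (∑ k, ‖u k y‖ ^ 2) :=
    integral_nonneg fun y => Real.sqrt_nonneg _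
  -- pointwise Cauchy–Schwarz + Bessel
  have hpt : ∀ y, ‖∑ k, u k y * a k y‖ ≤ Real.sqrt (∑ k, ‖u k y‖ ^ 2) * NF := by
    intro y
    calc ‖∑ k, u k y * a k y‖ ≤ ∑ k, ‖u k y * a k y‖ := norm_sum_le _ _
      _ = ∑ k, ‖u k y‖ * ‖a k y‖ := by simp [norm_mul]
      _ ≤ Real.sqrt (∑ k, ‖u k y‖ ^ 2) * Real.sqrt (∑ k, ‖a k y‖ ^ 2) :=
        Real.sum_mul_le_sqrt_mul_sqrt _ _ _
      _ ≤ Real.sqrt (∑ k, ‖u k y‖ ^ 2) * NF := by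
        refine mul_le_mul_of_nonneg_left ?_ (Real.sqrt_nonneg _)
        rw [show NF = Real.sqrt (NF ^ 2) from (Real.sqrt_sq hNFnn).symm]
        exact Real.sqrt_le_sqrt (hBessel y)
  have hsum_int : Integrable (fun y => ∑ k, u k y * a k y) volume :=
    integrable_finset_sum _ fun k _ => hiua k
  have hmain : NF ^ 2 ≤ c * ((∫ y, Real.sqrt (∑ k, ‖u k y‖ ^ 2)) * NF) := by
    have h0 : NF ^ 2 = ‖((NF : ℂ)) ^ 2‖ := by
      rw [norm_pow, Complex.norm_real, Real.norm_of_nonneg hNFnn]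
    rw [h0, hS, norm_mul, Complex.norm_real, Real.norm_of_nonneg hc.le]
    refine mul_le_mul_of_nonneg_left ?_ hc.le
    calc ‖∫ y, ∑ k, u k y * a k y‖ ≤ ∫ y, ‖∑ k, u k y * a k y‖ :=
          norm_integral_le_integral_norm _
      _ ≤ ∫ y, Real.sqrt (∑ k, ‖u k y‖ ^ 2) * NF :=
          integral_mono hsum_int.norm (hsq_int.mul_const NF) hpt
      _ = (∫ y, Real.sqrt (∑ k, ‖u k y‖ ^ 2)) * NF := integral_mul_const _ _
  have hNFle : NF ≤ c * ∫ y, Real.sqrt (∑ k, ‖u k y‖ ^ 2) := by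
    rcases eq_or_lt_of_le hNFnn with h | h
    · rw [← h]
      exact mul_nonneg hc.le hR0
    · have h2 := hmain
      rw [pow_two, ← mul_assoc] at h2
      exact le_of_mul_le_mul_right h2 h
  have hcc : c = (4 * Real.pi) ^ (-(3 : ℝ) / 2) * t ^ (-(3 : ℝ) / 2) := by
    rw [hc_def, Real.mul_rpow (by positivity) ht.le]
  rw [hLHS]
  calc NF ≤ c * ∫ y, Real.sqrt (∑ k, ‖u k y‖ ^ 2) := hNFle
    _ = (4 * Real.pi) ^ (-(3 : ℝ) / 2) * t ^ (-(3 : ℝ) / 2)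
        * ∫ y, Real.sqrt (∑ k, ‖u k y‖ ^ 2) := by rw [hcc, mul_assoc]
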